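/- Let G be the 3-dimensional Heisenberg group, Γ the integer lattice, and KT = (Γ\G) × S¹ the Kodaira–Thurston manifold, with global invariant 1-forms α, β, γ, η satisfying dα = dβ = dη = 0 and dγ = −α ∧ β. Then ω = α∧γ + β∧η is a symplectic form on KT, and the map L : H¹(KT) → H³(KT), a ↦ a ∪ [ω], is not surjective; hence (KT, ω) is not 1-Lefschetz. -/

import Mathlib

set_option maxHeartbeats 1000000

/-- Degree-1 generators `α = gen 0`, `β = gen 1`, `γ = gen 2`, `η = gen 3` of the
Chevalley–Eilenberg complex of the Kodaira–Thurston Lie algebra, modelled on the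
exterior algebra of `ℝ⁴`. -/
noncomputable abbrev KTgen (i : Fin 4) : ExteriorAlgebra ℝ (Fin 4 → ℝ) :=
  ExteriorAlgebra.ι ℝ (Pi.single i 1)

/-- The degree-`k` part of the exterior algebra of `ℝ⁴`. -/
noncomputable abbrev KTgrade (k : ℕ) : Submodule ℝ (ExteriorAlgebra ℝ (Fin 4 → ℝ)) :=
  (LinearMap.range (ExteriorAlgebra.ι ℝ :
    (Fin 4 → ℝ) →ₗ[ℝ] ExteriorAlgebra ℝ (Fin 4 → ℝ))) ^ k

namespace KTaux
open ExteriorAlgebra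

noncomputable def p3 : (Fin 4 → ℝ) →ₗ[ℝ] (Fin 3 → ℝ) where
  toFun v := ![v 1, v 2, v 3]
  map_add' u v := by funext i; fin_cases i <;> simp
  map_smul' c v := by funext i; fin_cases i <;> simp

noncomputable def q2 : (Fin 4 → ℝ) →ₗ[ℝ] (Fin 2 → ℝ) where
  toFun v := ![v 0, v 1]
  map_add' u v := by funext i; fin_cases i <;> simp
  map_smul' c v := by funext i; fin_cases i <;> simp

noncomputable def A3 : (Fin 4 → ℝ) [⋀^Fin 3]→ₗ[ℝ] ℝ :=
  Matrix.detRowAlternating.compLinearMap p3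
noncomputable def A2 : (Fin 4 → ℝ) [⋀^Fin 2]→ₗ[ℝ] ℝ :=
  Matrix.detRowAlternating.compLinearMap q2
noncomputable def A4 : (Fin 4 → ℝ) [⋀^Fin 4]→ₗ[ℝ] ℝ :=
  Matrix.detRowAlternating

lemma detRow_eq {n : ℕ} (M : Fin n → Fin n → ℝ) :
    Matrix.detRowAlternating M = (Matrix.of M).det := rfl

/-- A family of alternating maps concentrated in degree `n`. -/
noncomputable def Ffam (n : ℕ) (A : (Fin 4 → ℝ) [⋀^Fin n]→ₗ[ℝ] ℝ) :
    ∀ i : ℕ, (Fin 4 → ℝ) [⋀^Fin i]→ₗ[ℝ] ℝ :=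
  fun i => if h : i = n then h ▸ A else 0

lemma Ffam_self (n) (A : (Fin 4 → ℝ) [⋀^Fin n]→ₗ[ℝ] ℝ) : Ffam n A n = A := dif_pos rfl
lemma Ffam_ne {i n} (A : (Fin 4 → ℝ) [⋀^Fin n]→ₗ[ℝ] ℝ) (h : i ≠ n) : Ffam n A i = 0 :=
  dif_neg h

lemma prod2 (a b : Fin 4 → ℝ) :
    ι ℝ a * ι ℝ b = ιMulti ℝ 2 ![a, b] := by
  simp [ιMulti_apply, List.ofFn_succ, mul_assoc]

lemma prod3 (a b c : Fin 4 → ℝ) :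
    ι ℝ a * ι ℝ b * ι ℝ c = ιMulti ℝ 3 ![a, b, c] := by
  simp [ιMulti_apply, List.ofFn_succ, mul_assoc]

lemma prod4 (a b c e : Fin 4 → ℝ) :
    ι ℝ a * ι ℝ b * ι ℝ c * ι ℝ e = ιMulti ℝ 4 ![a, b, c, e] := by
  simp [ιMulti_apply, List.ofFn_succ, mul_assoc]

lemma phi2_eval (a b : Fin 4 → ℝ) :
    liftAlternating (Ffam 2 A2) (ι ℝ a * ι ℝ b) = A2 ![a, b] := by
  rw [prod2, liftAlternating_apply_ιMulti, Ffam_self]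

lemma phi3_eval (a b c : Fin 4 → ℝ) :
    liftAlternating (Ffam 3 A3) (ι ℝ a * ι ℝ b * ι ℝ c) = A3 ![a, b, c] := by
  rw [prod3, liftAlternating_apply_ιMulti, Ffam_self]

lemma phi4_eval (a b c e : Fin 4 → ℝ) :
    liftAlternating (Ffam 4 A4) (ι ℝ a * ι ℝ b * ι ℝ c * ι ℝ e) = A4 ![a, b, c, e] := by
  rw [prod4, liftAlternating_apply_ιMulti, Ffam_self]

/-- A functional concentrated in degree `n` vanishes on every other grade. -/
lemma vanish :
    ∀ (m : ℕ) (f : ∀ i : ℕ, (Fin 4 → ℝ) [⋀^Fin i]→ₗ[ℝ] ℝ), f m = 0 →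
      ∀ x ∈ KTgrade m, liftAlternating f x = 0 := by
  intro m
  induction m with
  | zero =>
    intro f hf x hx
    simp only [KTgrade, pow_zero] at hx
    obtain ⟨r, rfl⟩ := Submodule.mem_one.mp hx
    rw [liftAlternating_algebraMap, hf]
    simp
  | succ m ih =>
    intro f hf x hx
    simp only [KTgrade, pow_succ'] at hx
    refine Submodule.mul_induction_on hx ?_ ?_
    · rintro a ⟨v, rfl⟩ y hy
      rw [liftAlternating_ι_mul]
      refine ih _ ?_ y hy
      show (f (m + 1)).curryLeft v = 0
      rw [hf]
      ext w
      simp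
    · intro a b ha hb
      rw [map_add, ha, hb, add_zero]

lemma mem1 (i : Fin 4) : KTgen i ∈ KTgrade 1 := by
  simp only [KTgrade, pow_one]; exact LinearMap.mem_range_self _ _

lemma mem1' (v : Fin 4 → ℝ) : ι ℝ v ∈ KTgrade 1 := by
  simp only [KTgrade, pow_one]; exact LinearMap.mem_range_self _ _

lemma expand (v : Fin 4 → ℝ) :
    ι ℝ v = v 0 • KTgen 0 + v 1 • KTgen 1 + v 2 • KTgen 2 + v 3 • KTgen 3 := by
  have h : v 0 • (Pi.single 0 1 : Fin 4 → ℝ) + v 1 • (Pi.single 1 1 : Fin 4 → ℝ)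
      + v 2 • (Pi.single 2 1 : Fin 4 → ℝ) + v 3 • (Pi.single 3 1 : Fin 4 → ℝ) = v := by
    ext j; fin_cases j <;> simp [Pi.single_apply]
  conv_lhs => rw [← h]
  simp [map_add, map_smul]

end KTaux

open ExteriorAlgebra KTaux in
/-- On the Kodaira–Thurston manifold `KT` (whose de Rham cohomology is computed, by
Nomizu's theorem, from the Chevalley–Eilenberg complex with `dα = dβ = dη = 0`,
`dγ = -α∧β`), the 2-form `ω = α∧γ + β∧η` is symplectic (closed with `ω∧ω ≠ 0`), and
the map `L : H¹(KT) → H³(KT)`, `a ↦ a ∪ [ω]`, is not surjective; hence `(KT, ω)` is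
not 1-Lefschetz. -/
theorem kodaira_thurston_not_one_lefschetz
    (d : ExteriorAlgebra ℝ (Fin 4 → ℝ) →ₗ[ℝ] ExteriorAlgebra ℝ (Fin 4 → ℝ))
    (hd0 : ∀ x ∈ KTgrade 0, d x = 0)
    (hgr : ∀ k, Submodule.map d (KTgrade k) ≤ KTgrade (k + 1))
    (hleib : ∀ x ∈ KTgrade 1, ∀ y, d (x * y) = d x * y - x * d y)
    (hdd : d ∘ₗ d = 0)
    (hα : d (KTgen 0) = 0) (hβ : d (KTgen 1) = 0) (hη : d (KTgen 3) = 0)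
    (hγ : d (KTgen 2) = -(KTgen 0 * KTgen 1)) :
    d (KTgen 0 * KTgen 2 + KTgen 1 * KTgen 3) = 0 ∧
    (KTgen 0 * KTgen 2 + KTgen 1 * KTgen 3) *
      (KTgen 0 * KTgen 2 + KTgen 1 * KTgen 3) ≠ 0 ∧
    ¬ (∀ y ∈ KTgrade 3 ⊓ LinearMap.ker d,
        ∃ x ∈ KTgrade 1 ⊓ LinearMap.ker d,
          y - x * (KTgen 0 * KTgen 2 + KTgen 1 * KTgen 3) ∈
            KTgrade 3 ⊓ LinearMap.range d) := by
  set ω : ExteriorAlgebra ℝ (Fin 4 → ℝ) := KTgen 0 * KTgen 2 + KTgen 1 * KTgen 3 with hω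
  -- derivative of a general 1-form
  have hdι : ∀ v : Fin 4 → ℝ, d (ι ℝ v) = v 2 • -(KTgen 0 * KTgen 1) := by
    intro v
    rw [expand v]
    simp [map_add, map_smul, hα, hβ, hη, hγ]
  -- Part 1: dω = 0
  have part1 : d ω = 0 := by
    rw [hω, map_add, hleib _ (mem1 0) _, hleib _ (mem1 1) _, hα, hβ, hη, hγ]
    rw [mul_neg, mul_zero, zero_mul, zero_mul, zero_sub, neg_neg, zero_sub, neg_zero,
      add_zero, ← mul_assoc, ι_sq_zero, zero_mul]
  -- Part 2: ω ∧ ω ≠ 0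
  have part2 : ω * ω ≠ 0 := by
    intro h
    have := congrArg (liftAlternating (Ffam 4 A4)) h
    rw [map_zero, hω, add_mul, mul_add, mul_add] at this
    rw [show KTgen 0 * KTgen 2 * (KTgen 0 * KTgen 2)
        = KTgen 0 * KTgen 2 * KTgen 0 * KTgen 2 from (mul_assoc _ _ _).symm,
      show KTgen 0 * KTgen 2 * (KTgen 1 * KTgen 3)
        = KTgen 0 * KTgen 2 * KTgen 1 * KTgen 3 from (mul_assoc _ _ _).symm,
      show KTgen 1 * KTgen 3 * (KTgen 0 * KTgen 2)
        = KTgen 1 * KTgen 3 * KTgen 0 * KTgen 2 from (mul_assoc _ _ _).symm,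
      show KTgen 1 * KTgen 3 * (KTgen 1 * KTgen 3)
        = KTgen 1 * KTgen 3 * KTgen 1 * KTgen 3 from (mul_assoc _ _ _).symm] at this
    rw [map_add, map_add, map_add, phi4_eval, phi4_eval, phi4_eval, phi4_eval] at this
    have e1 : A4 ![Pi.single 0 1, Pi.single 2 1, Pi.single 0 1, Pi.single 2 1] = 0 := by
      simp [A4, detRow_eq, Matrix.det_succ_row_zero, Fin.sum_univ_succ, Pi.single_apply]
    have e2 : A4 ![Pi.single 0 1, Pi.single 2 1, Pi.single 1 1, Pi.single 3 1] = -1 := by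
      simp [A4, detRow_eq, Matrix.det_succ_row_zero, Fin.sum_univ_succ, Pi.single_apply]
    have e3 : A4 ![Pi.single 1 1, Pi.single 3 1, Pi.single 0 1, Pi.single 2 1] = -1 := by
      simp [A4, detRow_eq, Matrix.det_succ_row_zero, Fin.sum_univ_succ, Pi.single_apply]
      decide
    have e4 : A4 ![Pi.single 1 1, Pi.single 3 1, Pi.single 1 1, Pi.single 3 1] = 0 := by
      simp [A4, detRow_eq, Matrix.det_succ_row_zero, Fin.sum_univ_succ, Pi.single_apply]
    rw [e1, e2, e3, e4] at this
    norm_num at this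
  refine ⟨part1, part2, ?_⟩
  -- Part 3
  intro H
  -- the witness y = β ∧ γ ∧ η
  set y : ExteriorAlgebra ℝ (Fin 4 → ℝ) := KTgen 1 * KTgen 2 * KTgen 3 with hy
  have hy3 : y ∈ KTgrade 3 := by
    rw [hy, show KTgrade 3 = KTgrade 1 * KTgrade 1 * KTgrade 1 by
      simp only [KTgrade, pow_three, pow_one, mul_assoc]]
    exact Submodule.mul_mem_mul (Submodule.mul_mem_mul (mem1 1) (mem1 2)) (mem1 3)
  have hbab : KTgen 1 * (KTgen 0 * KTgen 1) = 0 := by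
    have h := ι_add_mul_swap (R := ℝ) ((Pi.single 0 1 : Fin 4 → ℝ)) ((Pi.single 1 1 : Fin 4 → ℝ))
    have h2 : KTgen 1 * KTgen 0 = -(KTgen 0 * KTgen 1) := eq_neg_of_add_eq_zero_right h
    calc KTgen 1 * (KTgen 0 * KTgen 1) = KTgen 1 * KTgen 0 * KTgen 1 := (mul_assoc _ _ _).symm
    _ = -(KTgen 0 * KTgen 1) * KTgen 1 := by rw [h2]
    _ = -(KTgen 0 * (KTgen 1 * KTgen 1)) := by rw [neg_mul, mul_assoc]
    _ = 0 := by rw [ι_sq_zero, mul_zero, neg_zero]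
  have hyker : d y = 0 := by
    have hγη : d (KTgen 2 * KTgen 3) = -(KTgen 0 * KTgen 1) * KTgen 3 := by
      rw [hleib _ (mem1 2) _, hγ, hη, mul_zero, sub_zero]
    rw [hy, mul_assoc, hleib _ (mem1 1) _, hβ, zero_mul, zero_sub, hγη,
      neg_mul, mul_neg, neg_neg, ← mul_assoc, ← mul_assoc,
      mul_assoc (KTgen 1) (KTgen 0) (KTgen 1), hbab, zero_mul]
  obtain ⟨x, ⟨hx1, hxker⟩, hxd⟩ := H y ⟨hy3, hyker⟩
  simp only [KTgrade, pow_one] at hx1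
  obtain ⟨v, rfl⟩ := hx1
  -- closedness of x forces v 2 = 0
  have hab1 : liftAlternating (Ffam 2 A2) (KTgen 0 * KTgen 1) = 1 := by
    rw [phi2_eval]
    simp [A2, q2, detRow_eq, Matrix.det_fin_two, Pi.single_apply]
  have hv2 : v 2 = 0 := by
    have h0 : d (ι ℝ v) = 0 := hxker
    rw [hdι] at h0
    have := congrArg (liftAlternating (Ffam 2 A2)) h0
    rw [map_zero, map_smul, map_neg, hab1] at this
    simpa using this
  -- the functional φ₃ kills every exact form
  have hker2 : ∀ w ∈ KTgrade 2, liftAlternating (Ffam 3 A3) (d w) = 0 := by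
    intro w hw
    simp only [KTgrade, pow_two] at hw
    refine Submodule.mul_induction_on hw ?_ ?_
    · rintro a ⟨u, rfl⟩ b ⟨u', rfl⟩
      rw [hleib _ (mem1' u) _, hdι, hdι, map_sub, smul_mul_assoc, mul_smul_comm,
        map_smul, map_smul, neg_mul, mul_neg, map_neg, map_neg,
        ← mul_assoc]
      have z1 : liftAlternating (Ffam 3 A3) (KTgen 0 * KTgen 1 * ι ℝ u') = 0 := by
        rw [phi3_eval]
        simp [A3, p3, detRow_eq, Matrix.det_fin_three, Pi.single_apply]
      have z2 : liftAlternating (Ffam 3 A3) (ι ℝ u * KTgen 0 * KTgen 1) = 0 := by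
        rw [phi3_eval]
        simp [A3, p3, detRow_eq, Matrix.det_fin_three, Pi.single_apply]
      rw [z1, z2]
      simp
    · intro a b ha hb
      rw [map_add, map_add, ha, hb, add_zero]
  have hexact : ∀ z, liftAlternating (Ffam 3 A3) (d z) = 0 := by
    intro z
    induction z using DirectSum.Decomposition.inductionOn
      (ℳ := fun i : ℕ => (⋀[ℝ]^i (Fin 4 → ℝ) : Submodule ℝ (ExteriorAlgebra ℝ (Fin 4 → ℝ)))) with
    | zero => simp
    | @homogeneous k w =>
      have hwk : (w : ExteriorAlgebra ℝ (Fin 4 → ℝ)) ∈ KTgrade k := w.2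
      rcases eq_or_ne k 2 with rfl | hk
      · exact hker2 _ hwk
      · have hmem : d (w : ExteriorAlgebra ℝ (Fin 4 → ℝ)) ∈ KTgrade (k + 1) :=
          hgr k ⟨w, hwk, rfl⟩
        exact vanish (k + 1) _ (Ffam_ne A3 (by omega)) _ hmem
    | add a b ha hb => rw [map_add, map_add, ha, hb, add_zero]
  -- evaluate φ₃ on y - x·ω = d z
  obtain ⟨-, z, hz⟩ := hxd
  have := congrArg (liftAlternating (Ffam 3 A3)) hz
  rw [hexact, map_sub] at this
  have hyval : liftAlternating (Ffam 3 A3) y = 1 := by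
    rw [hy, phi3_eval]
    simp [A3, p3, detRow_eq, Matrix.det_fin_three, Pi.single_apply]
  have hxωval : liftAlternating (Ffam 3 A3) (ι ℝ v * ω) = 0 := by
    rw [hω, mul_add, ← mul_assoc, ← mul_assoc, map_add, phi3_eval, phi3_eval]
    have w1 : A3 ![v, Pi.single 0 1, Pi.single 2 1] = 0 := by
      simp [A3, p3, detRow_eq, Matrix.det_fin_three, Pi.single_apply]
    have w2 : A3 ![v, Pi.single 1 1, Pi.single 3 1] = -(v 2) := by
      simp [A3, p3, detRow_eq, Matrix.det_fin_three, Pi.single_apply,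
        Matrix.vecHead, Matrix.vecTail]
    rw [w1, w2, hv2]
    norm_num
  rw [hyval, hxωval] at this
  norm_num at this
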